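/- In a first-countable ω-well-filtered T0 space X, every irreducible closed subset of X is countably-directed in the specialization order; consequently, every first-countable ω-well-filtered T0 space that is an ω*-d-space is sober. -/

import Mathlib

/-- A set is saturated if it is the intersection of all open sets containing it. -/
def IsSaturatedSet {X : Type*} [TopologicalSpace X] (A : Set X) : Prop :=
  A = ⋂₀ {U : Set X | IsOpen U ∧ A ⊆ U}

/-- `X` is ω-well-filtered. -/
def OmegaWellFiltered (X : Type*) [TopologicalSpace X] : Prop :=
  ∀ K : ℕ → Set X, (∀ n, (K n).Nonempty ∧ IsCompact (K n) ∧ IsSaturatedSet (K n)) →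
    (∀ n, K (n + 1) ⊆ K n) → ∀ U : Set X, IsOpen U → (⋂ n, K n) ⊆ U → ∃ n, K n ⊆ U

/-- A nonempty set `D` is countably-directed for the specialization order
(`x ≤ y` iff `x ∈ closure {y}`): every nonempty countable subset has an upper bound in `D`. -/
def CDspec {X : Type*} [TopologicalSpace X] (D : Set X) : Prop :=
  D.Nonempty ∧ ∀ S ⊆ D, S.Countable → S.Nonempty → ∃ b ∈ D, ∀ s ∈ S, s ∈ closure {b}

open Set Filter Topology

section Aux

variable {X : Type u} [TopologicalSpace X]

/-- The saturation of a set: intersection of all open sets containing it. -/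
def satur (C : Set X) : Set X := ⋂₀ {U : Set X | IsOpen U ∧ C ⊆ U}

lemma subset_satur (C : Set X) : C ⊆ satur C :=
  fun _p hp => Set.mem_sInter.2 fun _ hU => hU.2 hp

lemma satur_subset {C U : Set X} (hU : IsOpen U) (h : C ⊆ U) : satur C ⊆ U :=
  fun _ hp => Set.mem_sInter.1 hp U ⟨hU, h⟩

lemma satur_mono {C D : Set X} (h : C ⊆ D) : satur C ⊆ satur D := by
  intro p hp
  exact Set.mem_sInter.2 fun U hU => Set.mem_sInter.1 hp U ⟨hU.1, h.trans hU.2⟩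

lemma isSaturated_satur (C : Set X) : IsSaturatedSet (satur C) := by
  apply Set.Subset.antisymm
  · intro p hp
    exact Set.mem_sInter.2 fun U hU => hU.2 hp
  · intro p hp
    exact Set.mem_sInter.2 fun U hU =>
      Set.mem_sInter.1 hp U ⟨hU.1, satur_subset hU.1 hU.2⟩

lemma isCompact_satur {C : Set X} (h : IsCompact C) : IsCompact (satur C) := by
  refine isCompact_of_finite_subcover fun {ι} U hU hcov => ?_
  obtain ⟨t, ht⟩ := h.elim_finite_subcover U hU ((subset_satur C).trans hcov)
  exact ⟨t, satur_subset (isOpen_biUnion fun i _ => hU i) ht⟩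

lemma irr_finite_inter {A : Set X} (hA : IsIrreducible A)
    {ι : Type*} (t : Finset ι) (U : ι → Set X) (hO : ∀ i ∈ t, IsOpen (U i))
    (hm : ∀ i ∈ t, (A ∩ U i).Nonempty) : (A ∩ ⋂ i ∈ t, U i).Nonempty := by
  classical
  induction t using Finset.induction with
  | empty => simpa using hA.nonempty
  | @insert a s ha ih =>
    have h1 : (A ∩ U a).Nonempty := hm a (Finset.mem_insert_self a s)
    have h2 : (A ∩ ⋂ i ∈ s, U i).Nonempty :=
      ih (fun i hi => hO i (Finset.mem_insert_of_mem hi))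
        (fun i hi => hm i (Finset.mem_insert_of_mem hi))
    have h3 : IsOpen (⋂ i ∈ s, U i) :=
      isOpen_biInter_finset fun i hi => hO i (Finset.mem_insert_of_mem hi)
    have := hA.2 (U a) (⋂ i ∈ s, U i) (hO a (Finset.mem_insert_self a s)) h3 h1 h2
    simpa [Set.biInter_insert, Set.inter_assoc] using this

end Aux

/-- In a first-countable ω-well-filtered T0 space, every irreducible closed set is
countably-directed; consequently, if the space is moreover an ω*-d-space (the closure
of every countably-directed set has a generic point), it is sober. -/
theorem stmt19 {X : Type*} [TopologicalSpace X] [T0Space X] [FirstCountableTopology X]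
    (hwf : OmegaWellFiltered X) :
    (∀ A : Set X, IsIrreducible A → IsClosed A → CDspec A) ∧
      ((∀ D : Set X, CDspec D → ∃ x : X, closure D = closure {x}) →
        ∀ A : Set X, IsIrreducible A → IsClosed A → ∃! x : X, A = closure {x}) := by
  classical
  have main : ∀ A : Set X, IsIrreducible A → IsClosed A → CDspec A := by
    intro A hA hAc
    refine ⟨hA.nonempty, ?_⟩
    intro S hSA hSc hSne
    obtain ⟨x, rfl⟩ := hSc.exists_eq_range hSne
    have hxA : ∀ i, x i ∈ A := fun i => hSA (mem_range_self i)
    -- countable antitone neighborhood bases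
    have hbas : ∀ p : X, ∃ s : ℕ → Set X, (𝓝 p).HasAntitoneBasis s :=
      fun p => (𝓝 p).exists_antitone_basis
    choose b hb using hbas
    have hpb : ∀ (p : X) (n : ℕ), p ∈ interior (b p n) := fun p n =>
      mem_interior_iff_mem_nhds.2 ((hb p).toHasBasis.mem_of_mem trivial)
    -- the auxiliary sequence, via dependent choice
    set P : ℕ × X → Prop := fun q => q.2 ∈ A ∧ ∀ i ≤ q.1, q.2 ∈ b (x i) q.1 with hPdef
    set r : ℕ × X → ℕ × X → Prop := fun p q => p.1 < q.1 ∧ q.2 ∈ b p.2 q.1 with hrdef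
    have hstep : ∀ s : Finset (ℕ × X), (∀ q ∈ s, P q) → ∃ q, P q ∧ ∀ p ∈ s, r p q := by
      intro s hs
      set N : ℕ := (s.sup Prod.fst) + 1 with hN
      set t : Finset (ℕ ⊕ (ℕ × X)) :=
        (Finset.range (N + 1)).image Sum.inl ∪ s.image Sum.inr with ht
      set U : ℕ ⊕ (ℕ × X) → Set X :=
        Sum.elim (fun i => interior (b (x i) N)) (fun p => interior (b p.2 N)) with hU
      have hO : ∀ j ∈ t, IsOpen (U j) := by
        rintro (i | p) _ <;> exact isOpen_interior
      have hm : ∀ j ∈ t, (A ∩ U j).Nonempty := by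
        rintro (i | p) hj
        · exact ⟨x i, hxA i, hpb (x i) N⟩
        · have hps : p ∈ s := by
            simp only [ht, Finset.mem_union, Finset.mem_image] at hj
            rcases hj with ⟨i, _, h⟩ | ⟨q, hq, h⟩
            · exact absurd h (by simp)
            · rwa [← Sum.inr_injective h]
          exact ⟨p.2, (hs p hps).1, hpb p.2 N⟩
      obtain ⟨y0, hy0A, hy0U⟩ := irr_finite_inter hA t U hO hm
      refine ⟨(N, y0), ⟨hy0A, ?_⟩, ?_⟩
      · intro i hi
        have hmem : Sum.inl i ∈ t := by
          simp only [ht, Finset.mem_union, Finset.mem_image, Finset.mem_range]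
          exact Or.inl ⟨i, by omega, rfl⟩
        exact interior_subset (Set.mem_iInter₂.1 hy0U (Sum.inl i) hmem)
      · intro p hp
        have hple : p.1 ≤ s.sup Prod.fst := Finset.le_sup hp
        refine ⟨by omega, ?_⟩
        have hmem : Sum.inr p ∈ t := by
          simp only [ht, Finset.mem_union, Finset.mem_image]
          exact Or.inr ⟨p, hp, rfl⟩
        exact interior_subset (Set.mem_iInter₂.1 hy0U (Sum.inr p) hmem)
    obtain ⟨f, hfP, hfr⟩ := exists_seq_of_forall_finset_exists P r hstep
    set n : ℕ → ℕ := fun k => (f k).1 with hn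
    set y : ℕ → X := fun k => (f k).2 with hy
    have hyA : ∀ k, y k ∈ A := fun k => (hfP k).1
    have hnmono : StrictMono n :=
      strictMono_nat_of_lt_succ fun k => (hfr k (k + 1) (lt_add_one k)).1
    have hnk : ∀ k, k ≤ n k := fun k => hnmono.le_apply
    -- the sequence converges to every x i
    have htx : ∀ i, Tendsto y atTop (𝓝 (x i)) := by
      intro i
      rw [(hb (x i)).toHasBasis.tendsto_right_iff]
      intro M _
      filter_upwards [eventually_ge_atTop (max i M)] with k hk
      have h1 : i ≤ n k := le_trans (le_trans (le_max_left i M) hk) (hnk k)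
      have h2 : M ≤ n k := le_trans (le_trans (le_max_right i M) hk) (hnk k)
      exact (hb (x i)).antitone h2 ((hfP k).2 i h1)
    -- the sequence converges to each of its own terms
    have hty : ∀ j, Tendsto y atTop (𝓝 (y j)) := by
      intro j
      rw [(hb (y j)).toHasBasis.tendsto_right_iff]
      intro M _
      filter_upwards [eventually_ge_atTop (max (j + 1) M)] with k hk
      have hjk : j < k := lt_of_lt_of_le (Nat.lt_succ_self j) (le_trans (le_max_left _ _) hk)
      have h2 : M ≤ n k := le_trans (le_trans (le_max_right _ _) hk) (hnk k)
      exact (hb (y j)).antitone h2 (hfr j k hjk).2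
    -- compact saturated sets
    set C : ℕ → Set X := fun m => y '' {k | m ≤ k} with hC
    have hCcomp : ∀ m, IsCompact (C m) := by
      intro m
      have htail : Tendsto (fun p => y (p + (m + 1))) atTop (𝓝 (y m)) :=
        (hty m).comp (tendsto_add_atTop_nat (m + 1))
      have hCeq : C m = insert (y m) (Set.range fun p => y (p + (m + 1))) := by
        ext z
        constructor
        · rintro ⟨k, hk, rfl⟩
          rcases eq_or_lt_of_le (show m ≤ k from hk) with h | h
          · exact Or.inl (by rw [← h])
          · exact Or.inr ⟨k - (m + 1), by show y (k - (m + 1) + (m + 1)) = y k; rw [Nat.sub_add_cancel h]⟩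
        · rintro (rfl | ⟨p, rfl⟩)
          · exact ⟨m, le_refl m, rfl⟩
          · exact ⟨p + (m + 1), by simp only [Set.mem_setOf_eq]; omega, rfl⟩
      rw [hCeq]
      exact htail.isCompact_insert_range
    set K : ℕ → Set X := fun m => satur (C m) with hK
    have hymK : ∀ m, y m ∈ K m := fun m => subset_satur _ ⟨m, le_refl m, rfl⟩
    have hKprop : ∀ m, (K m).Nonempty ∧ IsCompact (K m) ∧ IsSaturatedSet (K m) :=
      fun m => ⟨⟨y m, hymK m⟩, isCompact_satur (hCcomp m), isSaturated_satur _⟩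
    have hKdec : ∀ m, K (m + 1) ⊆ K m :=
      fun m => satur_mono (Set.image_mono fun k hk => le_trans (Nat.le_succ m) hk)
    -- everything in the intersection is an upper bound of all x i
    have hKx : ∀ z ∈ ⋂ m, K m, ∀ i, x i ∈ closure ({z} : Set X) := by
      intro z hz i
      rw [mem_closure_iff]
      intro O hO hxO
      have hOev : O ∈ map y atTop := htx i (hO.mem_nhds hxO)
      obtain ⟨M, hM⟩ := mem_atTop_sets.1 (mem_map.1 hOev)
      have hCM : C M ⊆ O := by rintro _ ⟨k, hk, rfl⟩; exact hM k hk
      have hzO : z ∈ O := satur_subset hO hCM (Set.mem_iInter.1 hz M)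
      exact ⟨z, hzO, rfl⟩
    by_cases hcase : ∃ z ∈ ⋂ m, K m, z ∈ A
    · obtain ⟨z, hz, hzA⟩ := hcase
      exact ⟨z, hzA, by rintro s ⟨i, rfl⟩; exact hKx z hz i⟩
    · exfalso
      push_neg at hcase
      have hsub : (⋂ m, K m) ⊆ Aᶜ := fun z hz => hcase z hz
      obtain ⟨m, hm⟩ := hwf K hKprop hKdec Aᶜ hAc.isOpen_compl hsub
      exact hm (hymK m) (hyA m)
  refine ⟨main, ?_⟩
  intro hgen A hA hAc
  obtain ⟨x, hx⟩ := hgen A (main A hA hAc)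
  rw [hAc.closure_eq] at hx
  refine ⟨x, hx, ?_⟩
  intro z hz
  exact (inseparable_iff_closure_eq.2 (hz.symm.trans hx)).eq
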